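/- The set Z = {Σ_{ξ∈T} c_ξ E_ξ : c_ξ ∈ K} is stable under the adjoint action of U_L: for every one-parameter subgroup g_{i,j}(t) = I + tE_{i,j} with (i,j) a positive root of the reductive part r, one has Ad_{g_{i,j}(t)} Z ⊆ Z. -/

import Mathlib

open scoped Matrix Classical
open MvPolynomial

/-- `Rsum r k = r 0 + ⋯ + r (k-1)`, the partial sum `R_k` of block sizes. -/
def Rsum (r : ℕ → ℕ) (k : ℕ) : ℕ := (Finset.range k).sum r

/-- Index of the diagonal block containing row/column `a` (0-indexed). -/
def blockOf (r : ℕ → ℕ) (s a : ℕ) : ℕ :=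
  ((Finset.range s).filter fun k => Rsum r (k + 1) ≤ a).card

/-- The set `M` of roots `(i,j)` of the nilradical `m`. -/
def Mset (r : ℕ → ℕ) (s n : ℕ) : Finset (Fin n × Fin n) :=
  Finset.univ.filter fun p => blockOf r s (p.1 : ℕ) < blockOf r s (p.2 : ℕ)

/-- `γ' > γ` iff `γ' − γ` is a positive root. -/
def rootGt {n : ℕ} (γ' γ : Fin n × Fin n) : Prop :=
  (γ'.1 = γ.1 ∧ γ.2 < γ'.2) ∨ (γ'.2 = γ.2 ∧ γ'.1 < γ.1)

/-- A base `S` of `M`: pairwise incomparable, and every root of `M ∖ S`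
exceeds some element of `S`. -/
def IsBase {n : ℕ} (M S : Finset (Fin n × Fin n)) : Prop :=
  S ⊆ M ∧
  (∀ ξ ∈ S, ∀ η ∈ S, ξ ≠ η → ¬rootGt ξ η ∧ ¬rootGt η ξ) ∧
  (∀ γ ∈ M, γ ∉ S → ∃ ξ ∈ S, rootGt γ ξ)

/-- `p` is a positive root of the reductive (block-diagonal) part `r`. -/
def inDr (r : ℕ → ℕ) (s : ℕ) {n : ℕ} (p : Fin n × Fin n) : Prop :=
  p.1 < p.2 ∧ blockOf r s (p.1 : ℕ) = blockOf r s (p.2 : ℕ)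

/-- The coordinate ring `K[m]`: polynomials in the variables `x_ξ`, `ξ ∈ M`. -/
abbrev Rpoly (K : Type) [Field K] (r : ℕ → ℕ) (s n : ℕ) : Type :=
  MvPolynomial {p : Fin n × Fin n // p ∈ Mset r s n} K

/-- The formal matrix `𝕏` of variables (zero outside `M`). -/
noncomputable def Xmat (K : Type) [Field K] (r : ℕ → ℕ) (s n : ℕ) :
    Matrix (Fin n) (Fin n) (Rpoly K r s n) :=
  Matrix.of fun i j => if h : (i, j) ∈ Mset r s n then MvPolynomial.X ⟨(i, j), h⟩ else 0

/-- The minor of a matrix on the ordered row set `I` and ordered column set `J`. -/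
noncomputable def minorDet {n : ℕ} {A : Type} [CommRing A]
    (X : Matrix (Fin n) (Fin n) A) (I J : Finset (Fin n)) : A :=
  if h : J.card = I.card then
    Matrix.det (Matrix.of fun p q : Fin I.card =>
      X (I.orderIsoOfFin rfl p).1 (J.orderIsoOfFin h q).1)
  else 0

/-- The minor `M_γ` attached to a root `γ = (a,b)`: rows `ord{a, i₁, …, i_k}`,
columns `ord{j₁, …, j_k, b}`, where `S_γ = {(i,j) ∈ S : i > a, j < b}`. -/
noncomputable def Mminor (K : Type) [Field K] (r : ℕ → ℕ) (s n : ℕ)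
    (S : Finset (Fin n × Fin n)) (γ : Fin n × Fin n) : Rpoly K r s n :=
  minorDet (Xmat K r s n)
    (insert γ.1 ((S.filter fun p => γ.1 < p.1 ∧ p.2 < γ.2).image Prod.fst))
    (insert γ.2 ((S.filter fun p => γ.1 < p.1 ∧ p.2 < γ.2).image Prod.snd))

/-- The polynomial `L_{φ_q}` for an admissible pair `q = (ξ, ξ')`:
`Σ_{α₁+α₂=α_q, α₁,α₂ ∈ Δ⁺_r ∪ {0}} M_{ξ+α₁} M_{α₂+ξ'}`. -/
noncomputable def Lpoly (K : Type) [Field K] (r : ℕ → ℕ) (s n : ℕ)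
    (S : Finset (Fin n × Fin n)) (ξ ξ' : Fin n × Fin n) : Rpoly K r s n :=
  ∑ m ∈ Finset.univ.filter (fun m : Fin n =>
      (m = ξ.2 ∨ inDr r s (ξ.2, m)) ∧ (m = ξ'.1 ∨ inDr r s (m, ξ'.1))),
    Mminor K r s n S (ξ.1, m) * Mminor K r s n S (m, ξ'.2)

/-- The set `Φ` of roots `φ_q = α_q + ξ'` attached to admissible pairs `q = (ξ, ξ')`. -/
noncomputable def PhiSet (r : ℕ → ℕ) (s n : ℕ) (S : Finset (Fin n × Fin n)) :
    Finset (Fin n × Fin n) :=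
  ((S ×ˢ S).filter fun q => inDr r s (q.1.2, q.2.1)).image fun q => (q.1.2, q.2.2)

/-- The adjoint action of `g` on `K[m]`: the substitution `x_ξ ↦ (g⁻¹ 𝕏 g)_ξ`,
so that `(g·f)(x) = f(g⁻¹ x g)`. -/
noncomputable def adjAct (K : Type) [Field K] (r : ℕ → ℕ) (s n : ℕ)
    (g : Matrix (Fin n) (Fin n) K) : Rpoly K r s n →ₐ[K] Rpoly K r s n :=
  MvPolynomial.aeval fun ξ : {p : Fin n × Fin n // p ∈ Mset r s n} =>
    ((g⁻¹).map (fun a => (MvPolynomial.C a : Rpoly K r s n)) * Xmat K r s n *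
      g.map (fun a => (MvPolynomial.C a : Rpoly K r s n))) ξ.1.1 ξ.1.2

/-- Upper unitriangular matrices: the group `N`. -/
def IsUnitriangular {K : Type} [Field K] {n : ℕ} (g : Matrix (Fin n) (Fin n) K) : Prop :=
  (∀ i, g i i = 1) ∧ ∀ i j : Fin n, j < i → g i j = 0

/-- Membership in the unipotent radical `U` of `P`: `g = I + u` with `u ∈ m`. -/
def InU {K : Type} [Field K] (r : ℕ → ℕ) (s n : ℕ) (g : Matrix (Fin n) (Fin n) K) : Prop :=
  (∀ i, g i i = 1) ∧ ∀ i j : Fin n, i ≠ j → (i, j) ∉ Mset r s n → g i j = 0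

/-- The subalgebra of `K[m]` of polynomials invariant under the adjoint action of
all elements of a set `G` of matrices. -/
noncomputable def invariantAlg (K : Type) [Field K] (r : ℕ → ℕ) (s n : ℕ)
    (G : Set (Matrix (Fin n) (Fin n) K)) : Subalgebra K (Rpoly K r s n) where
  carrier := {f | ∀ g ∈ G, adjAct K r s n g f = f}
  mul_mem' := fun ha hb g hg => by rw [map_mul, ha g hg, hb g hg]
  add_mem' := fun ha hb g hg => by rw [map_add, ha g hg, hb g hg]
  algebraMap_mem' := fun c g hg => (adjAct K r s n g).commutes c

/-- `M'`: the roots of `M` with `E_ξ ∈ m²`, i.e. not lying in a superdiagonal block. -/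
def Mprime (r : ℕ → ℕ) (s n : ℕ) : Finset (Fin n × Fin n) :=
  (Mset r s n).filter fun p => blockOf r s (p.1 : ℕ) + 1 < blockOf r s (p.2 : ℕ)

/-- The broad base `T`: roots `ξ ∈ S`, together with roots `ξ ∈ M` such that
`ξ > γ` for some `γ ∈ S` with `x_ξ`, `x_γ` in the same block `X_{i,j}`. -/
noncomputable def Tset (r : ℕ → ℕ) (s n : ℕ) (S : Finset (Fin n × Fin n)) :
    Finset (Fin n × Fin n) :=
  S ∪ (Mset r s n).filter fun ξ => ∃ γ ∈ S, rootGt ξ γ ∧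
    blockOf r s (ξ.1 : ℕ) = blockOf r s (γ.1 : ℕ) ∧
    blockOf r s (ξ.2 : ℕ) = blockOf r s (γ.2 : ℕ)

/-- The invariant `N_ξ`: the variable `x_ξ` for `ξ ∈ M ∖ M'`, the minor `M_ξ` for `ξ ∈ M'`. -/
noncomputable def Npoly (K : Type) [Field K] (r : ℕ → ℕ) (s n : ℕ)
    (S : Finset (Fin n × Fin n)) (ξ : Fin n × Fin n) : Rpoly K r s n :=
  if ξ ∈ Mprime r s n then Mminor K r s n S ξ
  else if h : ξ ∈ Mset r s n then MvPolynomial.X ⟨ξ, h⟩ else 0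

/-- A matrix lies in the nilradical `m`. -/
def memNilrad {K : Type} [Field K] (r : ℕ → ℕ) (s n : ℕ)
    (x : Matrix (Fin n) (Fin n) K) : Prop :=
  ∀ p : Fin n × Fin n, p ∉ Mset r s n → x p.1 p.2 = 0

/-- `W` is a Zariski-open subset of the affine space `m`. -/
def IsZariskiOpenIn (K : Type) [Field K] (r : ℕ → ℕ) (s n : ℕ)
    (W : Set (Matrix (Fin n) (Fin n) K)) : Prop :=
  ∃ I : Set (Rpoly K r s n),
    W = {x | memNilrad r s n x ∧ ∃ f ∈ I,
      MvPolynomial.eval (fun ξ : {p : Fin n × Fin n // p ∈ Mset r s n} => x ξ.1.1 ξ.1.2) f ≠ 0}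



/-- `blockOf` is monotone. -/
lemma blockOf_mono (r : ℕ → ℕ) (s : ℕ) {a b : ℕ} (h : a ≤ b) :
    blockOf r s a ≤ blockOf r s b := by
  apply Finset.card_le_card
  intro k hk
  simp only [Finset.mem_filter] at hk ⊢
  exact ⟨hk.1, le_trans hk.2 h⟩

lemma lt_of_blockOf_lt {r : ℕ → ℕ} {s : ℕ} {a b : ℕ}
    (h : blockOf r s a < blockOf r s b) : a < b := by
  by_contra hc
  exact absurd (blockOf_mono r s (le_of_not_gt hc)) (not_le_of_gt h)

lemma fin_lt_of_blockOf_lt {r : ℕ → ℕ} {s n : ℕ} {a b : Fin n}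
    (h : blockOf r s (a : ℕ) < blockOf r s (b : ℕ)) : a < b :=
  Fin.lt_def.2 (lt_of_blockOf_lt h)

lemma blockOf_le_of_fin_lt {r : ℕ → ℕ} {s n : ℕ} {a b : Fin n} (h : a < b) :
    blockOf r s (a : ℕ) ≤ blockOf r s (b : ℕ) :=
  blockOf_mono r s (le_of_lt (Fin.lt_def.1 h))

lemma mem_Mset_iff {r : ℕ → ℕ} {s n : ℕ} {p : Fin n × Fin n} :
    p ∈ Mset r s n ↔ blockOf r s (p.1 : ℕ) < blockOf r s (p.2 : ℕ) := by
  simp [Mset]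

lemma mem_Tset_iff {r : ℕ → ℕ} {s n : ℕ} {S : Finset (Fin n × Fin n)}
    {p : Fin n × Fin n} :
    p ∈ Tset r s n S ↔ p ∈ S ∨ (p ∈ Mset r s n ∧ ∃ γ ∈ S, rootGt p γ ∧
      blockOf r s (p.1 : ℕ) = blockOf r s (γ.1 : ℕ) ∧
      blockOf r s (p.2 : ℕ) = blockOf r s (γ.2 : ℕ)) := by
  simp [Tset, Finset.mem_union, Finset.mem_filter]

/-- Two elements of a base sharing a row are equal. -/
lemma base_row_eq {n : ℕ} {M S : Finset (Fin n × Fin n)} (hS : IsBase M S)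
    {ξ η : Fin n × Fin n} (hξ : ξ ∈ S) (hη : η ∈ S) (h : ξ.1 = η.1) : ξ = η := by
  by_contra hne
  rcases lt_trichotomy ξ.2 η.2 with hlt | heq | hgt
  · exact (hS.2.1 η hη ξ hξ (fun e => hne e.symm)).1 (Or.inl ⟨h.symm, hlt⟩)
  · exact hne (Prod.ext h heq)
  · exact (hS.2.1 ξ hξ η hη hne).1 (Or.inl ⟨h, hgt⟩)

/-- Two elements of a base sharing a column are equal. -/
lemma base_col_eq {n : ℕ} {M S : Finset (Fin n × Fin n)} (hS : IsBase M S)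
    {ξ η : Fin n × Fin n} (hξ : ξ ∈ S) (hη : η ∈ S) (h : ξ.2 = η.2) : ξ = η := by
  by_contra hne
  rcases lt_trichotomy ξ.1 η.1 with hlt | heq | hgt
  · exact (hS.2.1 ξ hξ η hη hne).1 (Or.inr ⟨h, hlt⟩)
  · exact hne (Prod.ext heq h)
  · exact (hS.2.1 η hη ξ hξ (fun e => hne e.symm)).1 (Or.inr ⟨h.symm, hgt⟩)

/-- Row transfer: if `(j,b) ∈ T` and `i < j` lies in the same block as `j`,
then `(i,b) ∈ T`. -/
lemma key_row {n s : ℕ} {r : ℕ → ℕ} {S : Finset (Fin n × Fin n)}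
    (hS : IsBase (Mset r s n) S) {i j : Fin n} (hlt : i < j)
    (hbl : blockOf r s (i : ℕ) = blockOf r s (j : ℕ)) {b : Fin n}
    (hT : (j, b) ∈ Tset r s n S) : (i, b) ∈ Tset r s n S := by
  rcases mem_Tset_iff.1 hT with hjbS | ⟨hjbM, γ, hγS, hgt, hb1, hb2⟩
  · -- (j,b) ∈ S : then (i,b) > (j,b) with matching blocks
    have hM : blockOf r s ((j : Fin n) : ℕ) < blockOf r s ((b : Fin n) : ℕ) :=
      mem_Mset_iff.1 (hS.1 hjbS)
    exact mem_Tset_iff.2 (Or.inr ⟨mem_Mset_iff.2 (show blockOf r s (i : ℕ) <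
      blockOf r s (b : ℕ) by rw [hbl]; exact hM), (j, b), hjbS,
      Or.inr ⟨rfl, hlt⟩, hbl, rfl⟩)
  · replace hb1 : blockOf r s ((j : Fin n) : ℕ) = blockOf r s ((γ.1 : Fin n) : ℕ) := hb1
    replace hb2 : blockOf r s ((b : Fin n) : ℕ) = blockOf r s ((γ.2 : Fin n) : ℕ) := hb2
    have hjb : blockOf r s ((j : Fin n) : ℕ) < blockOf r s ((b : Fin n) : ℕ) :=
      mem_Mset_iff.1 hjbM
    have hibM : (i, b) ∈ Mset r s n := mem_Mset_iff.2 (show blockOf r s (i : ℕ) <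
      blockOf r s (b : ℕ) by rw [hbl]; exact hjb)
    rcases hgt with ⟨h1, h2⟩ | ⟨h1, h2⟩
    · -- row clause: γ = (j, c), c < b, same blocks ; the hard case
      replace h1 : j = γ.1 := h1
      replace h2 : γ.2 < b := h2
      by_cases hibS : (i, b) ∈ S
      · exact mem_Tset_iff.2 (Or.inl hibS)
      obtain ⟨ξ, hξS, hξgt⟩ := hS.2.2 _ hibM hibS
      have hξM : blockOf r s ((ξ.1 : Fin n) : ℕ) < blockOf r s ((ξ.2 : Fin n) : ℕ) :=
        mem_Mset_iff.1 (hS.1 hξS)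
      rcases hξgt with ⟨e1, e2⟩ | ⟨e1, e2⟩
      · -- ξ = (i, c'), c' < b ; claim blockOf c' = blockOf b
        replace e1 : i = ξ.1 := e1
        replace e2 : ξ.2 < b := e2
        have hclaim : blockOf r s ((ξ.2 : Fin n) : ℕ) = blockOf r s ((b : Fin n) : ℕ) := by
          by_contra hne
          have hltb : blockOf r s ((ξ.2 : Fin n) : ℕ) < blockOf r s ((b : Fin n) : ℕ) :=
            lt_of_le_of_ne (blockOf_le_of_fin_lt e2) hne
          have hjx2M : (j, ξ.2) ∈ Mset r s n := mem_Mset_iff.2 (show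
            blockOf r s (j : ℕ) < blockOf r s ((ξ.2 : Fin n) : ℕ) by
            rw [← hbl, e1]; exact hξM)
          have hjx2S : (j, ξ.2) ∉ S := by
            intro hmem
            have he : (j, ξ.2) = ξ := base_col_eq hS hmem hξS rfl
            have hje : j = ξ.1 := (Prod.ext_iff.1 he).1
            rw [← e1] at hje
            rw [hje] at hlt
            exact lt_irrefl _ hlt
          obtain ⟨η, hηS, hηgt⟩ := hS.2.2 _ hjx2M hjx2S
          rcases hηgt with ⟨f1, f2⟩ | ⟨f1, f2⟩
          · replace f1 : j = η.1 := f1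
            replace f2 : η.2 < ξ.2 := f2
            have hηγ : η = γ := base_row_eq hS hηS hγS (by rw [← f1, h1])
            rw [hηγ] at f2
            have hc : γ.2 < ξ.2 := f2
            have hc2 : ξ.2 < γ.2 := fin_lt_of_blockOf_lt (by rw [← hb2]; exact hltb)
            exact absurd (lt_trans hc hc2) (lt_irrefl _)
          · replace f1 : ξ.2 = η.2 := f1
            replace f2 : j < η.1 := f2
            have hηξ : η = ξ := base_col_eq hS hηS hξS f1.symm
            rw [hηξ, ← e1] at f2
            exact absurd (lt_trans f2 hlt) (lt_irrefl j)
        exact mem_Tset_iff.2 (Or.inr ⟨hibM, ξ, hξS, Or.inl ⟨e1, e2⟩,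
          show blockOf r s (i : ℕ) = blockOf r s ((ξ.1 : Fin n) : ℕ) by rw [e1],
          hclaim.symm⟩)
      · -- ξ = (a, b), i < a ; claim blockOf a = blockOf i
        replace e1 : b = ξ.2 := e1
        replace e2 : i < ξ.1 := e2
        have hclaim : blockOf r s ((ξ.1 : Fin n) : ℕ) = blockOf r s ((i : Fin n) : ℕ) := by
          by_contra hne
          have hlta : blockOf r s (i : ℕ) < blockOf r s ((ξ.1 : Fin n) : ℕ) :=
            lt_of_le_of_ne (blockOf_le_of_fin_lt e2) (fun e => hne e.symm)
          have hjξ1 : j < ξ.1 := fin_lt_of_blockOf_lt (by rw [← hbl]; exact hlta)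
          have hxcM : (ξ.1, γ.2) ∈ Mset r s n := mem_Mset_iff.2 (show
            blockOf r s ((ξ.1 : Fin n) : ℕ) < blockOf r s ((γ.2 : Fin n) : ℕ) by
            rw [← hb2, e1]; exact hξM)
          have hxcS : (ξ.1, γ.2) ∉ S := by
            intro hmem
            have he : (ξ.1, γ.2) = γ := base_col_eq hS hmem hγS rfl
            have h1' : ξ.1 = γ.1 := (Prod.ext_iff.1 he).1
            rw [← h1] at h1'
            rw [h1'] at hjξ1
            exact lt_irrefl _ hjξ1
          obtain ⟨η, hηS, hηgt⟩ := hS.2.2 _ hxcM hxcS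
          rcases hηgt with ⟨f1, f2⟩ | ⟨f1, f2⟩
          · replace f1 : ξ.1 = η.1 := f1
            replace f2 : η.2 < γ.2 := f2
            have hηξ : η = ξ := base_row_eq hS hηS hξS f1.symm
            rw [hηξ, ← e1] at f2
            exact absurd (lt_trans f2 h2) (lt_irrefl b)
          · replace f1 : γ.2 = η.2 := f1
            replace f2 : ξ.1 < η.1 := f2
            have hηγ : η = γ := base_col_eq hS hηS hγS f1.symm
            rw [hηγ, ← h1] at f2
            exact absurd (lt_trans f2 hjξ1) (lt_irrefl _)
        exact mem_Tset_iff.2 (Or.inr ⟨hibM, ξ, hξS, Or.inr ⟨e1, e2⟩,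
          hclaim.symm,
          show blockOf r s (b : ℕ) = blockOf r s ((ξ.2 : Fin n) : ℕ) by rw [e1]⟩)
    · -- column clause: γ = (a, b), j < a
      replace h1 : b = γ.2 := h1
      replace h2 : j < γ.1 := h2
      exact mem_Tset_iff.2 (Or.inr ⟨hibM, γ, hγS, Or.inr ⟨h1, lt_trans hlt h2⟩,
        show blockOf r s (i : ℕ) = blockOf r s ((γ.1 : Fin n) : ℕ) by
          rw [hbl]; exact hb1, hb2⟩)

/-- Column transfer: if `(a,i) ∈ T` and `i < j` lies in the same block as `j`,
then `(a,j) ∈ T`. -/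
lemma key_col {n s : ℕ} {r : ℕ → ℕ} {S : Finset (Fin n × Fin n)}
    (hS : IsBase (Mset r s n) S) {i j : Fin n} (hlt : i < j)
    (hbl : blockOf r s (i : ℕ) = blockOf r s (j : ℕ)) {a : Fin n}
    (hT : (a, i) ∈ Tset r s n S) : (a, j) ∈ Tset r s n S := by
  rcases mem_Tset_iff.1 hT with haiS | ⟨haiM, γ, hγS, hgt, hb1, hb2⟩
  · have hM : blockOf r s ((a : Fin n) : ℕ) < blockOf r s ((i : Fin n) : ℕ) :=
      mem_Mset_iff.1 (hS.1 haiS)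
    exact mem_Tset_iff.2 (Or.inr ⟨mem_Mset_iff.2 (show blockOf r s (a : ℕ) <
      blockOf r s (j : ℕ) by rw [← hbl]; exact hM), (a, i), haiS,
      Or.inl ⟨rfl, hlt⟩, rfl, hbl.symm⟩)
  · replace hb1 : blockOf r s ((a : Fin n) : ℕ) = blockOf r s ((γ.1 : Fin n) : ℕ) := hb1
    replace hb2 : blockOf r s ((i : Fin n) : ℕ) = blockOf r s ((γ.2 : Fin n) : ℕ) := hb2
    have hai : blockOf r s ((a : Fin n) : ℕ) < blockOf r s ((i : Fin n) : ℕ) :=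
      mem_Mset_iff.1 haiM
    have hajM : (a, j) ∈ Mset r s n := mem_Mset_iff.2 (show blockOf r s (a : ℕ) <
      blockOf r s (j : ℕ) by rw [← hbl]; exact hai)
    rcases hgt with ⟨h1, h2⟩ | ⟨h1, h2⟩
    · -- row clause: γ = (a, c), c < i
      replace h1 : a = γ.1 := h1
      replace h2 : γ.2 < i := h2
      exact mem_Tset_iff.2 (Or.inr ⟨hajM, γ, hγS, Or.inl ⟨h1, lt_trans h2 hlt⟩, hb1,
        show blockOf r s (j : ℕ) = blockOf r s ((γ.2 : Fin n) : ℕ) by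
          rw [← hbl]; exact hb2⟩)
    · -- column clause: γ = (a', i), a < a', same blocks ; the hard case
      replace h1 : i = γ.2 := h1
      replace h2 : a < γ.1 := h2
      by_cases hajS : (a, j) ∈ S
      · exact mem_Tset_iff.2 (Or.inl hajS)
      obtain ⟨ξ, hξS, hξgt⟩ := hS.2.2 _ hajM hajS
      have hξM : blockOf r s ((ξ.1 : Fin n) : ℕ) < blockOf r s ((ξ.2 : Fin n) : ℕ) :=
        mem_Mset_iff.1 (hS.1 hξS)
      rcases hξgt with ⟨e1, e2⟩ | ⟨e1, e2⟩
      · -- ξ = (a, c'), c' < j ; claim blockOf c' = blockOf j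
        replace e1 : a = ξ.1 := e1
        replace e2 : ξ.2 < j := e2
        have hclaim : blockOf r s ((ξ.2 : Fin n) : ℕ) = blockOf r s ((j : Fin n) : ℕ) := by
          by_contra hne
          have hltb : blockOf r s ((ξ.2 : Fin n) : ℕ) < blockOf r s ((j : Fin n) : ℕ) :=
            lt_of_le_of_ne (blockOf_le_of_fin_lt e2) hne
          have hξ2i : ξ.2 < i := fin_lt_of_blockOf_lt (by rw [hbl]; exact hltb)
          have hgxM : (γ.1, ξ.2) ∈ Mset r s n := mem_Mset_iff.2 (show
            blockOf r s ((γ.1 : Fin n) : ℕ) < blockOf r s ((ξ.2 : Fin n) : ℕ) by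
            rw [← hb1, e1]; exact hξM)
          have hgxS : (γ.1, ξ.2) ∉ S := by
            intro hmem
            have he : (γ.1, ξ.2) = ξ := base_col_eq hS hmem hξS rfl
            have h1' : γ.1 = ξ.1 := (Prod.ext_iff.1 he).1
            rw [← e1] at h1'
            rw [h1'] at h2
            exact lt_irrefl _ h2
          obtain ⟨η, hηS, hηgt⟩ := hS.2.2 _ hgxM hgxS
          rcases hηgt with ⟨f1, f2⟩ | ⟨f1, f2⟩
          · replace f1 : γ.1 = η.1 := f1
            replace f2 : η.2 < ξ.2 := f2
            have hηγ : η = γ := base_row_eq hS hηS hγS f1.symm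
            rw [hηγ, ← h1] at f2
            exact absurd (lt_trans f2 hξ2i) (lt_irrefl _)
          · replace f1 : ξ.2 = η.2 := f1
            replace f2 : γ.1 < η.1 := f2
            have hηξ : η = ξ := base_col_eq hS hηS hξS f1.symm
            rw [hηξ, ← e1] at f2
            exact absurd (lt_trans f2 h2) (lt_irrefl _)
        exact mem_Tset_iff.2 (Or.inr ⟨hajM, ξ, hξS, Or.inl ⟨e1, e2⟩,
          show blockOf r s (a : ℕ) = blockOf r s ((ξ.1 : Fin n) : ℕ) by rw [e1],
          hclaim.symm⟩)
      · -- ξ = (a'', j), a < a'' ; claim blockOf a'' = blockOf a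
        replace e1 : j = ξ.2 := e1
        replace e2 : a < ξ.1 := e2
        have hclaim : blockOf r s ((ξ.1 : Fin n) : ℕ) = blockOf r s ((a : Fin n) : ℕ) := by
          by_contra hne
          have hlta : blockOf r s (a : ℕ) < blockOf r s ((ξ.1 : Fin n) : ℕ) :=
            lt_of_le_of_ne (blockOf_le_of_fin_lt e2) (fun e => hne e.symm)
          have hxiM : (ξ.1, i) ∈ Mset r s n := mem_Mset_iff.2 (show
            blockOf r s ((ξ.1 : Fin n) : ℕ) < blockOf r s (i : ℕ) by
            rw [hbl, e1]; exact hξM)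
          have hxiS : (ξ.1, i) ∉ S := by
            intro hmem
            have he : (ξ.1, i) = γ := base_col_eq hS hmem hγS h1
            have h1' : ξ.1 = γ.1 := (Prod.ext_iff.1 he).1
            rw [h1'] at hlta
            rw [← hb1] at hlta
            exact lt_irrefl _ hlta
          obtain ⟨η, hηS, hηgt⟩ := hS.2.2 _ hxiM hxiS
          rcases hηgt with ⟨f1, f2⟩ | ⟨f1, f2⟩
          · replace f1 : ξ.1 = η.1 := f1
            replace f2 : η.2 < i := f2
            have hηξ : η = ξ := base_row_eq hS hηS hξS f1.symm
            rw [hηξ, ← e1] at f2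
            exact absurd (lt_trans hlt f2) (lt_irrefl _)
          · replace f1 : i = η.2 := f1
            replace f2 : ξ.1 < η.1 := f2
            have hηγ : η = γ := base_col_eq hS hηS hγS (by rw [← f1]; exact h1)
            rw [hηγ] at f2
            have hc2 : γ.1 < ξ.1 := fin_lt_of_blockOf_lt (by rw [← hb1]; exact hlta)
            exact absurd (lt_trans f2 hc2) (lt_irrefl _)
        exact mem_Tset_iff.2 (Or.inr ⟨hajM, ξ, hξS, Or.inr ⟨e1, e2⟩,
          hclaim.symm,
          show blockOf r s (j : ℕ) = blockOf r s ((ξ.2 : Fin n) : ℕ) by rw [e1]⟩)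

lemma Tset_subset_Mset {n s : ℕ} {r : ℕ → ℕ} {S : Finset (Fin n × Fin n)}
    (hS : IsBase (Mset r s n) S) : Tset r s n S ⊆ Mset r s n := by
  intro p hp
  rcases mem_Tset_iff.1 hp with h | ⟨h, _⟩
  · exact hS.1 h
  · exact h

/-- `Z = {Σ_{ξ∈T} c_ξ E_ξ : c_ξ ∈ K}` is stable under the adjoint action
of the one-parameter subgroups `g_{i,j}(t) = I + t E_{i,j}`, `(i,j) ∈ Δ⁺_r`, of `U_L`. -/
theorem statement13 (K : Type) [Field K] [IsAlgClosed K] [CharZero K]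
    (n s : ℕ) (r : ℕ → ℕ) (hpos : ∀ k < s, 0 < r k) (hsum : Rsum r s = n)
    (S : Finset (Fin n × Fin n)) (hS : IsBase (Mset r s n) S)
    (i j : Fin n) (hij : inDr r s (i, j)) (t : K)
    (z : Matrix (Fin n) (Fin n) K)
    (hz : ∀ p : Fin n × Fin n, p ∉ Tset r s n S → z p.1 p.2 = 0) :
    ∀ p : Fin n × Fin n, p ∉ Tset r s n S →
      ((1 + Matrix.single i j t) * z * (1 + Matrix.single i j t)⁻¹)
        p.1 p.2 = 0 := by
  intro p hp
  have hltij : i < j := hij.1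
  have hbl : blockOf r s (i : ℕ) = blockOf r s (j : ℕ) := hij.2
  set E := Matrix.single i j t with hE
  have hji : j ≠ i := ne_of_gt hltij
  have hE2 : E * E = 0 := Matrix.single_mul_single_of_ne t i j i hji t
  have hinv : (1 + E)⁻¹ = 1 - E := by
    apply Matrix.inv_eq_right_inv
    have h' : (1 + E) * (1 - E) = 1 - E * E := by noncomm_ring
    rw [h', hE2, sub_zero]
  rw [hinv]
  have hexp : (1 + E) * z * (1 - E) = z + E * z - z * E - E * z * E := by noncomm_ring
  rw [hexp]
  simp only [Matrix.sub_apply, Matrix.add_apply]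
  have h0 : z p.1 p.2 = 0 := hz p hp
  have h1 : (E * z) p.1 p.2 = 0 := by
    by_cases hpi : p.1 = i
    · rw [hpi, hE, Matrix.single_mul_apply_same]
      have hzjb : z j p.2 = 0 := by
        apply hz (j, p.2)
        intro hT
        have hh := key_row hS hltij hbl hT
        rw [← hpi] at hh
        exact hp hh
      rw [hzjb, mul_zero]
    · rw [hE, Matrix.single_mul_apply_of_ne t i j _ _ hpi]
  have h2 : (z * E) p.1 p.2 = 0 := by
    by_cases hpj : p.2 = j
    · rw [hpj, hE, Matrix.mul_single_apply_same]
      have hzai : z p.1 i = 0 := by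
        apply hz (p.1, i)
        intro hT
        have hh := key_col hS hltij hbl hT
        rw [← hpj] at hh
        exact hp hh
      rw [hzai, zero_mul]
    · rw [hE, Matrix.mul_single_apply_of_ne t i j _ _ hpj]
  have h3 : (E * z * E) p.1 p.2 = 0 := by
    by_cases hpj : p.2 = j
    · rw [hpj, hE, Matrix.mul_single_apply_same]
      by_cases hpi : p.1 = i
      · rw [hpi, Matrix.single_mul_apply_same]
        have hji' : z j i = 0 := by
          apply hz (j, i)
          intro hT
          have hMji : blockOf r s ((j : Fin n) : ℕ) < blockOf r s ((i : Fin n) : ℕ) :=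
            mem_Mset_iff.1 (Tset_subset_Mset hS hT)
          rw [hbl] at hMji
          exact absurd hMji (lt_irrefl _)
        rw [hji', mul_zero, zero_mul]
      · rw [Matrix.single_mul_apply_of_ne t i j _ _ hpi, zero_mul]
    · rw [hE, Matrix.mul_single_apply_of_ne t i j _ _ hpj]
  rw [h0, h1, h2, h3]
  ring
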